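/- Fix u ∈ (0,1) and N ≥ 2. Parameterize the PU on–off process by the arrival rate λ_n > 0 via λ_f = u·λ_n/(1−u), with u held fixed, and define the Fisher information I_m(λ_n,N) of the uniformly sampled traffic vector with respect to λ_n (inter-sample time T_c > 0). Then I_m(λ_n,N) = (u²/(1−u)²)·I_m(λ_f,N), where I_m(λ_f,N) = (Γ T_c)²(1−u)(1+Γ)(N−1)/(u(1−Γ)[Γ+u(1−Γ)²(1−u)]) with Γ = e^{−λ_f T_c/u} evaluated at λ_f = uλ_n/(1−u). Consequently, over a fixed observation window T with T_c = T/(N−1), lim_{N→∞} I_m(λ_n,N)^{−1} = λ_n/(2T·u). -/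

import Mathlib

open Finset Filter

/-- Transition probabilities of the PU on-off process:
`transProb u lf t x y = Pr_{xy}(t)` where `false` = idle, `true` = active. -/
noncomputable def transProb (u lf t : ℝ) : Bool → Bool → ℝ
  | false, false => 1 - u + u * Real.exp (-(lf * t) / u)
  | false, true  => 1 - (1 - u + u * Real.exp (-(lf * t) / u))
  | true,  true  => u + (1 - u) * Real.exp (-(lf * t) / u)
  | true,  false => 1 - (u + (1 - u) * Real.exp (-(lf * t) / u))

/-- Likelihood of a binary sample sequence `z` of length `n + 1`
with inter-sample times `T 1, …, T n`. -/
noncomputable def seqProb (u lf : ℝ) {n : ℕ} (T : ℕ → ℝ) (z : Fin (n + 1) → Bool) : ℝ :=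
  (if z 0 then u else 1 - u) *
    ∏ k : Fin n, transProb u lf (T (k.val + 1)) (z k.castSucc) (z k.succ)

/-- Closed form of the Fisher information `I_m(λ_f, N)` under uniform sampling
with inter-sample time `Tc` and `N - 1 = m` transitions, evaluated at
departure rate `lf`: `(Γ Tc)²(1-u)(1+Γ)(N-1)/(u(1-Γ)[Γ+u(1-Γ)²(1-u)])`
with `Γ = e^{-λ_f T_c/u}`. -/
noncomputable def fisherLf (u lf Tc : ℝ) (m : ℝ) : ℝ :=
  (Real.exp (-(lf * Tc) / u) * Tc) ^ 2 * (1 - u) *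
      (1 + Real.exp (-(lf * Tc) / u)) * m /
    (u * (1 - Real.exp (-(lf * Tc) / u)) *
      (Real.exp (-(lf * Tc) / u) + u * (1 - Real.exp (-(lf * Tc) / u)) ^ 2 * (1 - u)))


/-- derivative (w.r.t. l) of transProb u (u*l/(1-u)) Tc x y at l = ln -/
noncomputable def dT (u ln Tc : ℝ) : Bool → Bool → ℝ
  | false, false => -(u * (Tc / (1 - u)) * Real.exp (-(u * ln / (1 - u) * Tc) / u))
  | false, true  => u * (Tc / (1 - u)) * Real.exp (-(u * ln / (1 - u) * Tc) / u)
  | true,  true  => -((1 - u) * (Tc / (1 - u)) * Real.exp (-(u * ln / (1 - u) * Tc) / u))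
  | true,  false => (1 - u) * (Tc / (1 - u)) * Real.exp (-(u * ln / (1 - u) * Tc) / u)

noncomputable def gT (u ln Tc : ℝ) (x y : Bool) : ℝ :=
  dT u ln Tc x y / transProb u (u * ln / (1 - u)) Tc x y

noncomputable def score (u ln Tc : ℝ) {n : ℕ} (z : Fin (n + 1) → Bool) : ℝ :=
  ∑ k : Fin n, gT u ln Tc (z k.castSucc) (z k.succ)

section Aux
variable {u ln Tc : ℝ}

lemma hasDerivAt_E (hu : 0 < u) (hu1 : u < 1) :
    HasDerivAt (fun l => Real.exp (-(u * l / (1 - u) * Tc) / u))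
      (-(Tc / (1 - u)) * Real.exp (-(u * ln / (1 - u) * Tc) / u)) ln := by
  have hu0 : u ≠ 0 := ne_of_gt hu
  have h1u : (1 : ℝ) - u ≠ 0 := sub_ne_zero_of_ne (by linarith)
  have harg : ∀ l : ℝ, -(u * l / (1 - u) * Tc) / u = -(Tc / (1 - u)) * l := by
    intro l; field_simp
  have h : HasDerivAt (fun l : ℝ => Real.exp (-(Tc / (1 - u)) * l))
      (Real.exp (-(Tc / (1 - u)) * ln) * (-(Tc / (1 - u)) * 1)) ln :=
    ((hasDerivAt_id ln).const_mul (-(Tc / (1 - u)))).exp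
  have h2 : (fun l : ℝ => Real.exp (-(u * l / (1 - u) * Tc) / u)) =
      fun l : ℝ => Real.exp (-(Tc / (1 - u)) * l) := by
    funext l; rw [harg l]
  rw [h2, harg ln]
  convert h using 1; ring

lemma hasDerivAt_trans (hu : 0 < u) (hu1 : u < 1) (x y : Bool) :
    HasDerivAt (fun l => transProb u (u * l / (1 - u)) Tc x y) (dT u ln Tc x y) ln := by
  have hE := hasDerivAt_E (u := u) (ln := ln) (Tc := Tc) hu hu1
  cases x <;> cases y <;> simp only [transProb, dT]
  · exact ((hE.const_mul u).const_add (1 - u)).congr_deriv (by ring)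
  · exact (((hE.const_mul u).const_add (1 - u)).const_sub 1).congr_deriv (by ring)
  · exact (((hE.const_mul (1 - u)).const_add u).const_sub 1).congr_deriv (by ring)
  · exact ((hE.const_mul (1 - u)).const_add u).congr_deriv (by ring)

end Aux
section Aux2
variable {u ln Tc : ℝ}

lemma E_pos_lt (hu : 0 < u) (hu1 : u < 1) (hln : 0 < ln) (hTc : 0 < Tc) :
    0 < Real.exp (-(u * ln / (1 - u) * Tc) / u) ∧
      Real.exp (-(u * ln / (1 - u) * Tc) / u) < 1 := by
  refine ⟨Real.exp_pos _, ?_⟩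
  rw [Real.exp_lt_one_iff]
  have h1u : (0:ℝ) < 1 - u := by linarith
  have h2 : 0 < u * ln / (1 - u) * Tc := by positivity
  exact div_neg_of_neg_of_pos (by linarith) hu

lemma trans_pos (hu : 0 < u) (hu1 : u < 1) (hln : 0 < ln) (hTc : 0 < Tc) (x y : Bool) :
    0 < transProb u (u * ln / (1 - u)) Tc x y := by
  obtain ⟨hE0, hE1⟩ := E_pos_lt hu hu1 hln hTc
  cases x <;> cases y <;> simp only [transProb] <;> nlinarith

lemma seqProb_pos (hu : 0 < u) (hu1 : u < 1) (hln : 0 < ln) (hTc : 0 < Tc)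
    {n : ℕ} (z : Fin (n + 1) → Bool) :
    0 < seqProb u (u * ln / (1 - u)) (fun _ => Tc) z := by
  unfold seqProb
  apply mul_pos
  · cases z 0 <;> simp <;> linarith
  · exact Finset.prod_pos fun k _ => trans_pos hu hu1 hln hTc _ _

lemma seqProb_snoc (u lf : ℝ) {n : ℕ} (T : ℕ → ℝ) (z : Fin (n + 1) → Bool) (y : Bool) :
    seqProb u lf T (Fin.snoc z y) =
      seqProb u lf T z * transProb u lf (T (n + 1)) (z (Fin.last n)) y := by
  unfold seqProb
  rw [Fin.prod_univ_castSucc]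
  simp only [Fin.snoc_castSucc, Fin.snoc_last, Fin.succ_castSucc, Fin.coe_castSucc,
    Fin.succ_last, Fin.val_last]
  have h0 : (Fin.snoc z y : Fin (n + 2) → Bool) 0 = z 0 := by
    rw [show (0 : Fin (n + 2)) = Fin.castSucc 0 from rfl, Fin.snoc_castSucc]
  rw [h0]
  ring

lemma score_snoc {n : ℕ} (z : Fin (n + 1) → Bool) (y : Bool) :
    score u ln Tc (Fin.snoc z y) = score u ln Tc z + gT u ln Tc (z (Fin.last n)) y := by
  unfold score
  rw [Fin.sum_univ_castSucc]
  simp only [Fin.snoc_castSucc, Fin.snoc_last, Fin.succ_castSucc, Fin.succ_last]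

lemma hasDerivAt_seqProb (hu : 0 < u) (hu1 : u < 1) (hln : 0 < ln) (hTc : 0 < Tc) :
    ∀ {n : ℕ} (z : Fin (n + 1) → Bool),
      HasDerivAt (fun l => seqProb u (u * l / (1 - u)) (fun _ => Tc) z)
        (seqProb u (u * ln / (1 - u)) (fun _ => Tc) z * score u ln Tc z) ln := by
  intro n
  induction n with
  | zero =>
    intro z
    have hfun : (fun l => seqProb u (u * l / (1 - u)) (fun _ => Tc) z) =
        fun _ : ℝ => (if z 0 then u else 1 - u) := by
      funext l; unfold seqProb; simp
    rw [hfun]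
    have : score u ln Tc z = 0 := by unfold score; simp
    rw [this, mul_zero]
    exact hasDerivAt_const _ _
  | succ m IH =>
    intro z
    rw [← Fin.snoc_init_self z]
    set z' := Fin.init z with hz'
    set y := z (Fin.last (m + 1)) with hy
    have hfun : (fun l => seqProb u (u * l / (1 - u)) (fun _ => Tc) (Fin.snoc z' y)) =
        fun l => seqProb u (u * l / (1 - u)) (fun _ => Tc) z' *
          transProb u (u * l / (1 - u)) Tc (z' (Fin.last m)) y := by
      funext l; rw [seqProb_snoc]
    rw [hfun, seqProb_snoc, score_snoc]
    have h := (IH z').mul (hasDerivAt_trans (ln := ln) (Tc := Tc) hu hu1 (z' (Fin.last m)) y)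
    refine h.congr_deriv ?_
    have hP : transProb u (u * ln / (1 - u)) Tc (z' (Fin.last m)) y ≠ 0 :=
      ne_of_gt (trans_pos hu hu1 hln hTc _ _)
    unfold gT
    field_simp

lemma deriv_log_seqProb (hu : 0 < u) (hu1 : u < 1) (hln : 0 < ln) (hTc : 0 < Tc)
    {n : ℕ} (z : Fin (n + 1) → Bool) :
    deriv (fun l => Real.log (seqProb u (u * l / (1 - u)) (fun _ => Tc) z)) ln =
      score u ln Tc z := by
  have hp := seqProb_pos hu hu1 hln hTc z
  have h := (hasDerivAt_seqProb hu hu1 hln hTc z).log (ne_of_gt hp)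
  rw [h.deriv]
  field_simp

end Aux2
section Aux3
variable {u ln Tc : ℝ}

lemma sum_snoc {n : ℕ} (F : (Fin (n + 1) → Bool) → ℝ) :
    ∑ z : Fin (n + 1) → Bool, F z =
      ∑ z : Fin n → Bool, ∑ y : Bool, F (Fin.snoc z y) := by
  rw [← Equiv.sum_comp (Fin.snocEquiv (fun _ => Bool)) F]
  rw [Fintype.sum_prod_type]
  rw [Finset.sum_comm]
  simp [Fin.snocEquiv]

lemma marginal (hu : 0 < u) (hu1 : u < 1) :
    ∀ (n : ℕ) (f : Bool → ℝ),
      ∑ z : Fin (n + 1) → Bool,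
          seqProb u (u * ln / (1 - u)) (fun _ => Tc) z * f (z (Fin.last n)) =
        u * f true + (1 - u) * f false := by
  intro n
  induction n with
  | zero =>
    intro f
    rw [← Equiv.sum_comp (Equiv.funUnique (Fin 1) Bool).symm]
    simp [seqProb, Fin.last]
  | succ m IH =>
    intro f
    rw [sum_snoc]
    have hstep : ∀ (z : Fin (m + 1) → Bool),
        ∑ y : Bool, seqProb u (u * ln / (1 - u)) (fun _ => Tc) (Fin.snoc z y) *
            f ((Fin.snoc z y : Fin (m + 2) → Bool) (Fin.last (m + 1))) =
          seqProb u (u * ln / (1 - u)) (fun _ => Tc) z *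
            (transProb u (u * ln / (1 - u)) Tc (z (Fin.last m)) true * f true +
             transProb u (u * ln / (1 - u)) Tc (z (Fin.last m)) false * f false) := by
      intro z
      rw [Fintype.sum_bool]
      rw [seqProb_snoc, seqProb_snoc]
      simp only [Fin.snoc_last]
      ring
    rw [Finset.sum_congr rfl fun z _ => hstep z]
    rw [IH (fun x => transProb u (u * ln / (1 - u)) Tc x true * f true +
        transProb u (u * ln / (1 - u)) Tc x false * f false)]
    simp only [transProb]
    ring

lemma trans_sum_one (x : Bool) :
    transProb u (u * ln / (1 - u)) Tc x true + transProb u (u * ln / (1 - u)) Tc x false = 1 := by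
  cases x <;> simp [transProb]

lemma gP_sum (hu : 0 < u) (hu1 : u < 1) (hln : 0 < ln) (hTc : 0 < Tc) (x : Bool) :
    gT u ln Tc x true * transProb u (u * ln / (1 - u)) Tc x true +
      gT u ln Tc x false * transProb u (u * ln / (1 - u)) Tc x false = 0 := by
  have ht := ne_of_gt (trans_pos hu hu1 hln hTc x true)
  have hf := ne_of_gt (trans_pos hu hu1 hln hTc x false)
  unfold gT
  rw [div_mul_cancel₀ _ ht, div_mul_cancel₀ _ hf]
  cases x <;> simp [dT] <;> ring

noncomputable def hsq (u ln Tc : ℝ) (x : Bool) : ℝ :=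
  gT u ln Tc x true ^ 2 * transProb u (u * ln / (1 - u)) Tc x true +
    gT u ln Tc x false ^ 2 * transProb u (u * ln / (1 - u)) Tc x false

lemma fisher_sum (hu : 0 < u) (hu1 : u < 1) (hln : 0 < ln) (hTc : 0 < Tc) :
    ∀ (n : ℕ),
      ∑ z : Fin (n + 1) → Bool,
          (score u ln Tc z) ^ 2 * seqProb u (u * ln / (1 - u)) (fun _ => Tc) z =
        n * (u * hsq u ln Tc true + (1 - u) * hsq u ln Tc false) := by
  intro n
  induction n with
  | zero =>
    simp [score]
  | succ m IH =>
    rw [sum_snoc]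
    have hstep : ∀ (z : Fin (m + 1) → Bool),
        ∑ y : Bool, (score u ln Tc (Fin.snoc z y)) ^ 2 *
            seqProb u (u * ln / (1 - u)) (fun _ => Tc) (Fin.snoc z y) =
          (score u ln Tc z) ^ 2 * seqProb u (u * ln / (1 - u)) (fun _ => Tc) z +
            seqProb u (u * ln / (1 - u)) (fun _ => Tc) z * hsq u ln Tc (z (Fin.last m)) := by
      intro z
      rw [Fintype.sum_bool, seqProb_snoc, seqProb_snoc, score_snoc, score_snoc]
      have h1 := trans_sum_one (u := u) (ln := ln) (Tc := Tc) (z (Fin.last m))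
      have h2 := gP_sum hu hu1 hln hTc (z (Fin.last m))
      have h3 : hsq u ln Tc (z (Fin.last m)) =
          gT u ln Tc (z (Fin.last m)) true ^ 2 *
              transProb u (u * ln / (1 - u)) Tc (z (Fin.last m)) true +
            gT u ln Tc (z (Fin.last m)) false ^ 2 *
              transProb u (u * ln / (1 - u)) Tc (z (Fin.last m)) false := rfl
      set p := seqProb u (u * ln / (1 - u)) (fun _ => Tc) z
      set s := score u ln Tc z
      set gt' := gT u ln Tc (z (Fin.last m)) true
      set gf := gT u ln Tc (z (Fin.last m)) false
      set Pt := transProb u (u * ln / (1 - u)) Tc (z (Fin.last m)) true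
      set Pf := transProb u (u * ln / (1 - u)) Tc (z (Fin.last m)) false
      rw [h3]
      linear_combination (p * s ^ 2) * h1 + (2 * p * s) * h2
    rw [Finset.sum_congr rfl fun z _ => hstep z]
    rw [Finset.sum_add_distrib, IH, marginal hu hu1 m (hsq u ln Tc)]
    push_cast
    ring

end Aux3

section Aux4
variable {u ln Tc : ℝ}

lemma fisherLf_linear (u lf Tc : ℝ) (m : ℝ) :
    fisherLf u lf Tc m = m * fisherLf u lf Tc 1 := by
  unfold fisherLf; ring

lemma closed_form (hu : 0 < u) (hu1 : u < 1) (hln : 0 < ln) (hTc : 0 < Tc) :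
    u * hsq u ln Tc true + (1 - u) * hsq u ln Tc false =
      u ^ 2 / (1 - u) ^ 2 * fisherLf u (u * ln / (1 - u)) Tc 1 := by
  obtain ⟨hE0, hE1⟩ := E_pos_lt hu hu1 hln hTc (u := u) (ln := ln) (Tc := Tc)
  set E := Real.exp (-(u * ln / (1 - u) * Tc) / u) with hE
  have hEeq : Real.exp (-(u * ln / (1 - u) * Tc) / u) = E := rfl
  have hu0 : u ≠ 0 := ne_of_gt hu
  have h1u : (0:ℝ) < 1 - u := by linarith
  have h1u0 : (1:ℝ) - u ≠ 0 := ne_of_gt h1u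
  have hP00 : (1:ℝ) - u + u * E ≠ 0 := by nlinarith
  have hP01 : (1:ℝ) - (1 - u + u * E) ≠ 0 := by nlinarith
  have hP11 : u + (1 - u) * E ≠ 0 := by nlinarith
  have hP10 : (1:ℝ) - (u + (1 - u) * E) ≠ 0 := by nlinarith
  have h1E : (1:ℝ) - E ≠ 0 := by nlinarith
  have hD : E + u * (1 - E) ^ 2 * (1 - u) ≠ 0 := by
    have h := mul_nonneg (mul_nonneg (le_of_lt hu) (sq_nonneg (1 - E))) (le_of_lt h1u)
    nlinarith
  simp only [hsq, gT, dT, transProb, fisherLf, hEeq]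
  field_simp
  ring
end Aux4
section Aux5
variable {u ln T : ℝ}

lemma slope_exp : Filter.Tendsto (fun h : ℝ => (Real.exp h - 1) / h) (nhdsWithin 0 {x | x ≠ 0}) (nhds 1) := by
  have h := Real.hasDerivAt_exp 0
  rw [hasDerivAt_iff_tendsto_slope] at h
  rw [Real.exp_zero] at h
  refine h.congr fun x => ?_
  simp [slope_def_field]

lemma part2 (hu : 0 < u) (hu1 : u < 1) (hln : 0 < ln) (hT : 0 < T) :
    Filter.Tendsto
        (fun N : ℕ =>
          (u ^ 2 / (1 - u) ^ 2 *
            fisherLf u (u * ln / (1 - u)) (T / ((N : ℝ) - 1)) ((N : ℝ) - 1))⁻¹)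
        Filter.atTop
        (nhds (ln / (2 * T * u))) := by
  have h1u : (0:ℝ) < 1 - u := by linarith
  set a : ℝ := ln * T / (1 - u) with ha_def
  have ha : 0 < a := by positivity
  clear_value a
  set G : ℝ → ℝ := fun x => Real.exp (-a / x) with hG_def
  -- G → 1
  have h0 : Filter.Tendsto (fun x : ℝ => -a / x) Filter.atTop (nhds 0) :=
    tendsto_const_nhds.div_atTop tendsto_id
  have hG : Filter.Tendsto G Filter.atTop (nhds 1) := by
    have := (Real.continuous_exp.tendsto 0).comp h0
    rwa [Real.exp_zero] at this
  -- x * (1 - G x) → a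
  have hcomp : Filter.Tendsto (fun x : ℝ => -a / x) Filter.atTop (nhdsWithin 0 {x | x ≠ 0}) := by
    rw [tendsto_nhdsWithin_iff]
    refine ⟨h0, ?_⟩
    filter_upwards [Filter.eventually_gt_atTop 0] with x hx
    have : -a / x < 0 := div_neg_of_neg_of_pos (by linarith) hx
    exact ne_of_lt this
  have htmp := slope_exp.comp hcomp
  have hB : Filter.Tendsto (fun x : ℝ => x * (1 - G x)) Filter.atTop (nhds a) := by
    have h1 : Filter.Tendsto (fun x : ℝ => a * ((Real.exp (-a / x) - 1) / (-a / x)))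
        Filter.atTop (nhds (a * 1)) := htmp.const_mul a
    rw [mul_one] at h1
    refine h1.congr' ?_
    filter_upwards [Filter.eventually_gt_atTop 0] with x hx
    have hx0 : x ≠ 0 := ne_of_gt hx
    have ha0 : a ≠ 0 := ne_of_gt ha
    simp only [hG_def]
    have h2 : (Real.exp (-a / x) - 1) / (-a / x) = x * (1 - Real.exp (-a / x)) / a := by
      rw [div_div_eq_mul_div, div_eq_div_iff (neg_ne_zero.mpr ha0) ha0]
      ring
    rw [h2, mul_div_assoc', mul_div_cancel_left₀ _ ha0]
  -- the limit function
  have hnum : Filter.Tendsto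
      (fun x : ℝ => (1 - u) * (x * (1 - G x)) * (G x + u * (1 - u) * (1 - G x) ^ 2))
      Filter.atTop (nhds ((1 - u) * a * (1 + u * (1 - u) * (1 - 1) ^ 2))) :=
    (tendsto_const_nhds.mul hB).mul
      (hG.add (tendsto_const_nhds.mul ((tendsto_const_nhds.sub hG).pow 2)))
  have hden : Filter.Tendsto (fun x : ℝ => u * T ^ 2 * (G x) ^ 2 * (1 + G x))
      Filter.atTop (nhds (u * T ^ 2 * 1 ^ 2 * (1 + 1))) :=
    (tendsto_const_nhds.mul (hG.pow 2)).mul (tendsto_const_nhds.add hG)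
  have hdne : u * T ^ 2 * 1 ^ 2 * (1 + 1) ≠ 0 := by positivity
  have hF := hnum.div hden hdne
  have hval : (1 - u) * a * (1 + u * (1 - u) * (1 - 1) ^ 2) / (u * T ^ 2 * 1 ^ 2 * (1 + 1))
      = ln / (2 * T * u) := by
    rw [ha_def]; field_simp; ring
  rw [hval] at hF
  -- compose with N ↦ (N:ℝ) - 1
  have hx : Filter.Tendsto (fun N : ℕ => (N : ℝ) - 1) Filter.atTop Filter.atTop := by
    have := Filter.tendsto_atTop_add_const_right Filter.atTop (-1 : ℝ)
      (tendsto_natCast_atTop_atTop (R := ℝ))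
    simpa [sub_eq_add_neg] using this
  have hseq := hF.comp hx
  refine hseq.congr' ?_
  filter_upwards [Filter.eventually_ge_atTop 2] with N hN
  set x : ℝ := (N : ℝ) - 1 with hx_def
  have hx1 : (1:ℝ) ≤ x := by
    have : (2:ℝ) ≤ (N : ℝ) := by exact_mod_cast hN
    simp only [hx_def]; linarith
  have hxpos : 0 < x := by linarith
  have hx0 : x ≠ 0 := ne_of_gt hxpos
  have hu0 : u ≠ 0 := ne_of_gt hu
  have h1u0 : (1:ℝ) - u ≠ 0 := ne_of_gt h1u
  -- the exponent in fisherLf equals -a/x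
  have hexp : -(u * ln / (1 - u) * (T / x)) / u = -a / x := by
    rw [ha_def]; field_simp
  have hGx0 : 0 < G x := Real.exp_pos _
  have hGx1 : G x < 1 := by
    rw [hG_def, Real.exp_lt_one_iff]
    exact div_neg_of_neg_of_pos (by linarith) hxpos
  have hT0 : T ≠ 0 := ne_of_gt hT
  have hG0 : G x ≠ 0 := ne_of_gt hGx0
  have h1G : (1:ℝ) - G x ≠ 0 := by nlinarith
  have h1G' : (1:ℝ) + G x ≠ 0 := by nlinarith
  have hD : G x + u * (1 - G x) ^ 2 * (1 - u) ≠ 0 := by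
    have h := mul_nonneg (mul_nonneg (le_of_lt hu) (sq_nonneg (1 - G x))) (le_of_lt h1u)
    nlinarith
  show (1 - u) * (x * (1 - G x)) * (G x + u * (1 - u) * (1 - G x) ^ 2) /
      (u * T ^ 2 * (G x) ^ 2 * (1 + G x))
    = (u ^ 2 / (1 - u) ^ 2 * fisherLf u (u * ln / (1 - u)) (T / x) x)⁻¹
  unfold fisherLf
  rw [hexp]
  rw [show Real.exp (-a / x) = G x from rfl]
  field_simp

end Aux5

/-- parameterizing the PU process by the arrival rate `λ_n` via
`λ_f = uλ_n/(1-u)` (with `u` fixed), the Fisher information of the uniformly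
sampled traffic vector (`N = n + 1` samples, inter-sample time `T_c`) with
respect to `λ_n` satisfies `I_m(λ_n,N) = (u²/(1-u)²) I_m(λ_f,N)`; consequently,
over a fixed observation window `T` (inter-sample time `T/(N-1)`),
`I_m(λ_n,N)⁻¹ → λ_n/(2Tu)` as `N → ∞`. -/
theorem fisher_information_lambda_n (u ln : ℝ)
    (hu : 0 < u) (hu1 : u < 1) (hln : 0 < ln)
    (n : ℕ) (hn : 1 ≤ n) (Tc : ℝ) (hTc : 0 < Tc) (T : ℝ) (hT : 0 < T) :
    (∑ z : Fin (n + 1) → Bool,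
        (deriv (fun l => Real.log (seqProb u (u * l / (1 - u)) (fun _ => Tc) z)) ln) ^ 2
          * seqProb u (u * ln / (1 - u)) (fun _ => Tc) z
      = u ^ 2 / (1 - u) ^ 2 * fisherLf u (u * ln / (1 - u)) Tc (n : ℝ))
    ∧ Filter.Tendsto
        (fun N : ℕ =>
          (u ^ 2 / (1 - u) ^ 2 *
            fisherLf u (u * ln / (1 - u)) (T / ((N : ℝ) - 1)) ((N : ℝ) - 1))⁻¹)
        Filter.atTop
        (nhds (ln / (2 * T * u))) := by
  constructor
  · calc ∑ z : Fin (n + 1) → Bool,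
        (deriv (fun l => Real.log (seqProb u (u * l / (1 - u)) (fun _ => Tc) z)) ln) ^ 2
          * seqProb u (u * ln / (1 - u)) (fun _ => Tc) z
        = ∑ z : Fin (n + 1) → Bool,
            (score u ln Tc z) ^ 2 * seqProb u (u * ln / (1 - u)) (fun _ => Tc) z :=
          Finset.sum_congr rfl fun z _ => by rw [deriv_log_seqProb hu hu1 hln hTc]
      _ = n * (u * hsq u ln Tc true + (1 - u) * hsq u ln Tc false) :=
          fisher_sum hu hu1 hln hTc n
      _ = u ^ 2 / (1 - u) ^ 2 * fisherLf u (u * ln / (1 - u)) Tc (n : ℝ) := by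
          rw [closed_form hu hu1 hln hTc, fisherLf_linear u (u * ln / (1 - u)) Tc (n : ℝ)]
          ring
  · exact part2 hu hu1 hln hT
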